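/- Let q be a prime power, n ≥ 3, a ∈ F_q, l a divisor of q^n - 1, and p_1, ..., p_r the distinct primes dividing q^n - 1 but not l. Let N_a(l_1, l_2) denote the number of α ∈ F_{q^n}^* such that α is l_1-free, α + α^{-1} is l_2-free, and Tr_{F_{q^n}/F_q}(α) = a. Then N_a(q^n - 1, q^n - 1) ≥ Σ_{i=1}^{r} N_a(p_i l, l) + Σ_{i=1}^{r} N_a(l, p_i l) − (2r − 1) N_a(l, l). -/

import Mathlib

open scoped Classical

/-- `ξ` is `e`-free in the field `K`: any representation `ξ = γ ^ d` with `d ∣ e`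
forces `d = 1`. -/
def IsEFree (K : Type*) [Field K] (e : ℕ) (ξ : K) : Prop :=
  ∀ (d : ℕ) (γ : K), d ∣ e → ξ = γ ^ d → d = 1

/-- The number of `α ∈ F_{q^n}^*` such that `α` is `l₁`-free, `α + α⁻¹` is
`l₂`-free and `Tr(α) = a`. -/
noncomputable def Ntr (F K : Type*) [Field F] [Field K] [Fintype K] [Algebra F K]
    (a : F) (l₁ l₂ : ℕ) : ℕ :=
  (Finset.univ.filter fun α : Kˣ =>
    IsEFree K l₁ (α : K) ∧ IsEFree K l₂ ((α : K) + (α : K)⁻¹) ∧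
      Algebra.trace F K (α : K) = a).card

lemma isEFree_of_dvd {K : Type*} [Field K] {e₁ e₂ : ℕ} (h : e₁ ∣ e₂) {ξ : K}
    (hξ : IsEFree K e₂ ξ) : IsEFree K e₁ ξ :=
  fun d γ hd => hξ d γ (hd.trans h)

lemma isEFree_full {K : Type*} [Field K] {e l : ℕ} (he : 0 < e)
    (P : Finset ℕ) (hP : ∀ p, p ∈ P ↔ p.Prime ∧ p ∣ e ∧ ¬ p ∣ l)
    {ξ : K} (h1 : IsEFree K l ξ) (h2 : ∀ p ∈ P, IsEFree K (p * l) ξ) :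
    IsEFree K e ξ := by
  intro d γ hd hξ
  by_contra hd1
  have hs : d.minFac.Prime := Nat.minFac_prime hd1
  obtain ⟨m, hm⟩ := Nat.minFac_dvd d
  have hξ' : ξ = (γ ^ m) ^ d.minFac := by rw [hξ, ← pow_mul, mul_comm, ← hm]
  by_cases hsl : d.minFac ∣ l
  · exact hs.ne_one (h1 d.minFac (γ ^ m) hsl hξ')
  · have hsP : d.minFac ∈ P := (hP _).2 ⟨hs, (Nat.minFac_dvd d).trans hd, hsl⟩
    exact hs.ne_one (h2 _ hsP d.minFac (γ ^ m) (dvd_mul_right _ _) hξ')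

theorem sieve_inequality
    (q n : ℕ) (hq : ∃ p k, Nat.Prime p ∧ 0 < k ∧ q = p ^ k) (hn : 3 ≤ n)
    (F K : Type*) [Field F] [Fintype F] [Field K] [Fintype K] [Algebra F K]
    (hF : Fintype.card F = q) (hK : Fintype.card K = q ^ n)
    (a : F) (l : ℕ) (hl : l ∣ q ^ n - 1) (P : Finset ℕ)
    (hP : ∀ p, p ∈ P ↔ p.Prime ∧ p ∣ q ^ n - 1 ∧ ¬ p ∣ l) :
    (Ntr F K a (q ^ n - 1) (q ^ n - 1) : ℤ) ≥
      (∑ p ∈ P, (Ntr F K a (p * l) l : ℤ)) +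
      (∑ p ∈ P, (Ntr F K a l (p * l) : ℤ)) -
      (2 * P.card - 1) * Ntr F K a l l := by
  obtain ⟨p0, k, hp0, hk, hqeq⟩ := hq
  have hq2 : 2 ≤ q := by
    calc 2 ≤ p0 := hp0.two_le
    _ ≤ p0 ^ k := Nat.le_self_pow hk.ne' p0
    _ = q := hqeq.symm
  have he : 0 < q ^ n - 1 := by
    have : 1 < q ^ n := Nat.one_lt_pow (by omega) hq2
    omega
  set e := q ^ n - 1 with he_def
  set S : Finset Kˣ := Finset.univ.filter fun α : Kˣ =>
    IsEFree K l (α : K) ∧ IsEFree K l ((α : K) + (α : K)⁻¹) ∧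
      Algebra.trace F K (α : K) = a with hS
  set T : Finset Kˣ := Finset.univ.filter fun α : Kˣ =>
    IsEFree K e (α : K) ∧ IsEFree K e ((α : K) + (α : K)⁻¹) ∧
      Algebra.trace F K (α : K) = a with hT
  set A : ℕ → Finset Kˣ := fun p => Finset.univ.filter fun α : Kˣ =>
    IsEFree K (p * l) (α : K) ∧ IsEFree K l ((α : K) + (α : K)⁻¹) ∧
      Algebra.trace F K (α : K) = a with hA
  set B : ℕ → Finset Kˣ := fun p => Finset.univ.filter fun α : Kˣ =>
    IsEFree K l (α : K) ∧ IsEFree K (p * l) ((α : K) + (α : K)⁻¹) ∧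
      Algebra.trace F K (α : K) = a with hB
  have hNT : Ntr F K a e e = T.card := rfl
  have hNS : Ntr F K a l l = S.card := rfl
  have hNA : ∀ p, Ntr F K a (p * l) l = (A p).card := fun _ => rfl
  have hNB : ∀ p, Ntr F K a l (p * l) = (B p).card := fun _ => rfl
  have hAS : ∀ p, A p ⊆ S := by
    intro p α hα
    simp only [hA, hS, Finset.mem_filter, Finset.mem_univ, true_and] at hα ⊢
    exact ⟨isEFree_of_dvd (dvd_mul_left l p) hα.1, hα.2⟩
  have hBS : ∀ p, B p ⊆ S := by
    intro p α hα
    simp only [hA, hB, hS, Finset.mem_filter, Finset.mem_univ, true_and] at hα ⊢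
    exact ⟨hα.1, isEFree_of_dvd (dvd_mul_left l p) hα.2.1, hα.2.2⟩
  have hTS : T ⊆ S := by
    intro α hα
    simp only [hT, hS, Finset.mem_filter, Finset.mem_univ, true_and] at hα ⊢
    exact ⟨isEFree_of_dvd hl hα.1, isEFree_of_dvd hl hα.2.1, hα.2.2⟩
  -- key pointwise fact
  have key : ∀ α ∈ S, (∀ p ∈ P, α ∈ A p) → (∀ p ∈ P, α ∈ B p) → α ∈ T := by
    intro α hα hA' hB'
    simp only [hS, Finset.mem_filter, Finset.mem_univ, true_and] at hα
    simp only [hT, Finset.mem_filter, Finset.mem_univ, true_and]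
    refine ⟨isEFree_full he P hP hα.1 ?_, isEFree_full he P hP hα.2.1 ?_, hα.2.2⟩
    · intro p hp
      have := hA' p hp
      simp only [hA, Finset.mem_filter, Finset.mem_univ, true_and] at this
      exact this.1
    · intro p hp
      have := hB' p hp
      simp only [hB, Finset.mem_filter, Finset.mem_univ, true_and] at this
      exact this.2.1
  -- rewrite sums of cards as sums over S
  have hsum : ∀ C : ℕ → Finset Kˣ, (∀ p, C p ⊆ S) →
      ∑ p ∈ P, (C p).card = ∑ α ∈ S, (P.filter fun p => α ∈ C p).card := by
    intro C hC
    have h1 : ∀ p, (C p).card = ∑ α ∈ S, if α ∈ C p then 1 else 0 := by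
      intro p
      rw [← Finset.card_filter]
      congr 1
      rw [Finset.filter_mem_eq_inter, Finset.inter_eq_right.mpr (hC p)]
    calc ∑ p ∈ P, (C p).card = ∑ p ∈ P, ∑ α ∈ S, if α ∈ C p then 1 else 0 := by
          simp_rw [h1]
      _ = ∑ α ∈ S, ∑ p ∈ P, if α ∈ C p then 1 else 0 := Finset.sum_comm
      _ = ∑ α ∈ S, (P.filter fun p => α ∈ C p).card := by
          simp_rw [Finset.card_filter]
  have hTcard : ∑ α ∈ S, (if α ∈ T then 1 else 0) = T.card := by
    rw [← Finset.card_filter, Finset.filter_mem_eq_inter, Finset.inter_eq_right.mpr hTS]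
  -- main counting inequality in ℕ
  have main : (∑ p ∈ P, (A p).card) + (∑ p ∈ P, (B p).card) + S.card ≤
      2 * P.card * S.card + T.card := by
    rw [hsum A hAS, hsum B hBS, ← hTcard, ← Finset.sum_add_distrib]
    have : S.card = ∑ _α ∈ S, 1 := (Finset.card_eq_sum_ones S)
    rw [this, ← Finset.sum_add_distrib]
    have h2 : 2 * P.card * ∑ _α ∈ S, 1 = ∑ _α ∈ S, 2 * P.card := by
      rw [Finset.sum_const, Finset.sum_const]; ring
    rw [h2, ← Finset.sum_add_distrib]
    apply Finset.sum_le_sum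
    intro α hα
    have hfA : (P.filter fun p => α ∈ A p).card ≤ P.card :=
      Finset.card_filter_le _ _
    have hfB : (P.filter fun p => α ∈ B p).card ≤ P.card :=
      Finset.card_filter_le _ _
    by_cases hαT : α ∈ T
    · simp only [hαT, if_pos]; omega
    · simp only [hαT, if_neg, not_false_iff]
      have : ¬ ((P.filter fun p => α ∈ A p).card = P.card ∧
          (P.filter fun p => α ∈ B p).card = P.card) := by
        rintro ⟨h1, h2⟩
        have e1 : (P.filter fun p => α ∈ A p) = P :=
          Finset.eq_of_subset_of_card_le (Finset.filter_subset _ _) (le_of_eq h1.symm)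
        have e2 : (P.filter fun p => α ∈ B p) = P :=
          Finset.eq_of_subset_of_card_le (Finset.filter_subset _ _) (le_of_eq h2.symm)
        apply hαT
        apply key α hα
        · intro p hp
          have := e1 ▸ hp
          exact (Finset.mem_filter.mp this).2
        · intro p hp
          have := e2 ▸ hp
          exact (Finset.mem_filter.mp this).2
      omega
  rw [hNT, hNS]
  simp_rw [hNA, hNB]
  push_cast
  push_cast at main
  linarith
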